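/- arXiv:1801.07389 — 3 statements merged into one kernel-verified Lean document; each statement's English description precedes it below -/
import Mathlib

section
/- Under the cyclic coordinate PIGD setup, for every k ≥ 0 the following descent inequality holds: [F(x^k) + Σ_{i=1}^m (β_{k,i}/(2γ_{k,i}))‖x_i^k − x_i^{k−1}‖²] − [F(x^{k+1}) + Σ_{i=1}^m (β_{k+1,i}/(2γ_{k+1,i}))‖x_i^{k+1} − x_i^k‖²] ≥ ((1−c)·L̲/(2c))·‖x^{k+1} − x^k‖², where L̲ := min_{1≤i≤m} L_i. -/
/-- The product space `∏ i, ℝ^{n i}` with the ℓ² product norm. -/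
abbrev PIGDSpace (m : ℕ) (nn : Fin m → ℕ) :=
  PiLp 2 fun i : Fin m => EuclideanSpace ℝ (Fin (nn i))

open RealInnerProductSpace

lemma pigd_block_descent {m : ℕ} {nn : Fin m → ℕ}
    (f : PIGDSpace m nn → ℝ) (f' : PIGDSpace m nn → PIGDSpace m nn)
    (hf' : ∀ x, HasGradientAt f (f' x) x)
    (i : Fin m) (Li : ℝ) (hLi0 : 0 ≤ Li)
    (hlip : ∀ (x : PIGDSpace m nn) (u v : EuclideanSpace ℝ (Fin (nn i))),
      ‖f' (WithLp.toLp 2 (Function.update x i u)) i - f' (WithLp.toLp 2 (Function.update x i v)) i‖ ≤ Li * ‖u - v‖)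
    (u : PIGDSpace m nn) (d : EuclideanSpace ℝ (Fin (nn i))) :
    f (WithLp.toLp 2 (Function.update u i (u i + d))) ≤ f u + ⟪f' u i, d⟫ + Li / 2 * ‖d‖ ^ 2 := by
  set w : PIGDSpace m nn := WithLp.toLp 2 (Pi.single i d : ∀ j, EuclideanSpace ℝ (Fin (nn j))) with hw
  have hup : ∀ t : ℝ, u + t • w = WithLp.toLp 2 (Function.update u i (u i + t • d)) := by
    intro t; ext j : 1
    by_cases h : j = i
    · subst h; simp [hw, Pi.single_eq_same]
    · simp [hw, Pi.single_eq_of_ne h, Function.update_of_ne h]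
  have hinner : ∀ a : PIGDSpace m nn, ⟪a, w⟫ = ⟪a i, d⟫ := by
    intro a
    rw [PiLp.inner_apply]
    rw [Finset.sum_eq_single i]
    · simp [hw, Pi.single_eq_same]
    · intro j _ hj; simp [hw, Pi.single_eq_of_ne hj]
    · intro h; exact absurd (Finset.mem_univ i) h
  have hderiv : ∀ t : ℝ, HasDerivAt (fun s => f (u + s • w)) ⟪f' (u + t • w) i, d⟫ t := by
    intro t
    have h1 : HasDerivAt (fun s : ℝ => u + s • w) w t := by
      simpa using ((hasDerivAt_id t).smul_const w).const_add u
    have h2 := (hf' (u + t • w)).hasFDerivAt.comp_hasDerivAt t h1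
    simp [InnerProductSpace.toDual_apply_apply, hinner] at h2; exact h2
  have hlip' : ∀ t : ℝ, ‖f' (u + t • w) i - f' u i‖ ≤ Li * (|t| * ‖d‖) := by
    intro t
    have h0 : u = WithLp.toLp 2 (Function.update u i (u i)) := by
      ext j : 1; by_cases h : j = i
      · subst h; simp
      · simp [Function.update_of_ne h]
    calc ‖f' (u + t • w) i - f' u i‖
        = ‖f' (WithLp.toLp 2 (Function.update u i (u i + t • d))) i - f' (WithLp.toLp 2 (Function.update u i (u i))) i‖ := by
          rw [hup t]
          conv_lhs => rw [h0]
          simp [Function.update_idem]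
      _ ≤ Li * ‖(u i + t • d) - u i‖ := hlip u _ _
      _ = Li * (|t| * ‖d‖) := by rw [add_sub_cancel_left, norm_smul, Real.norm_eq_abs]
  set φ : ℝ → ℝ := fun t => f (u + t • w) - t * ⟪f' u i, d⟫ - Li * ‖d‖ ^ 2 * t ^ 2 / 2 with hφ
  have hφd : ∀ t : ℝ, HasDerivAt φ (⟪f' (u + t • w) i, d⟫ - ⟪f' u i, d⟫ - Li * ‖d‖ ^ 2 * t) t := by
    intro t
    have h3 : HasDerivAt (fun s : ℝ => s * ⟪f' u i, d⟫) ⟪f' u i, d⟫ t := by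
      simpa using (hasDerivAt_id t).mul_const ⟪f' u i, d⟫
    have h4 : HasDerivAt (fun s : ℝ => Li * ‖d‖ ^ 2 * s ^ 2 / 2) (Li * ‖d‖ ^ 2 * t) t := by
      have := ((hasDerivAt_pow 2 t).const_mul (Li * ‖d‖ ^ 2)).div_const 2
      exact this.congr_deriv (by norm_num; ring)
    exact ((hderiv t).sub h3).sub h4
  have hmono : AntitoneOn φ (Set.Icc 0 1) := by
    apply antitoneOn_of_deriv_nonpos (convex_Icc 0 1)
    · exact (fun t _ => (hφd t).differentiableAt.continuousAt.continuousWithinAt)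
    · exact fun t _ => ((hφd t).differentiableAt).differentiableWithinAt
    · intro t ht
      rw [interior_Icc] at ht
      rw [(hφd t).deriv]
      have h6 := hlip' t
      have h7 : ⟪f' (u + t • w) i - f' u i, d⟫ ≤ ‖f' (u + t • w) i - f' u i‖ * ‖d‖ :=
        real_inner_le_norm _ _
      rw [inner_sub_left] at h7
      have h8 : |t| = t := abs_of_pos ht.1
      rw [h8] at h6
      nlinarith [norm_nonneg d, norm_nonneg (f' (u + t • w) i - f' u i), ht.1.le]
  have h9 : φ 1 ≤ φ 0 := hmono (Set.mem_Icc.mpr ⟨le_refl 0, zero_le_one⟩)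
    (Set.mem_Icc.mpr ⟨zero_le_one, le_refl 1⟩) zero_le_one
  have h10 : u + (1:ℝ) • w = WithLp.toLp 2 (Function.update u i (u i + d)) := by rw [hup 1, one_smul]
  have h11 : u + (0:ℝ) • w = u := by rw [zero_smul, add_zero]
  simp only [hφ, h10, h11] at h9
  nlinarith [h9]

lemma pigd_prox_strong {n : ℕ} (g : EuclideanSpace ℝ (Fin n) → ℝ)
    (hg : ConvexOn ℝ Set.univ g) (γ' : ℝ) (hγ : 0 < γ')
    (w p : EuclideanSpace ℝ (Fin n))
    (hp : IsMinOn (fun z => ‖z - w‖ ^ 2 / (2 * γ') + g z) Set.univ p)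
    (z : EuclideanSpace ℝ (Fin n)) :
    ‖p - w‖ ^ 2 / (2 * γ') + g p + ‖z - p‖ ^ 2 / (2 * γ')
      ≤ ‖z - w‖ ^ 2 / (2 * γ') + g z := by
  set K : ℝ := ‖z - p‖ ^ 2 / (2 * γ') with hK
  set D : ℝ := (‖z - w‖ ^ 2 / (2 * γ') + g z) - (‖p - w‖ ^ 2 / (2 * γ') + g p) with hD
  have key : ∀ l ∈ Set.Ioo (0:ℝ) 1, (1 - l) * K ≤ D := by
    rintro l ⟨hl0, hl1⟩
    have hmin := isMinOn_iff.mp hp ((1 - l) • p + l • z) (Set.mem_univ _)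
    have hconv := hg.2 (Set.mem_univ p) (Set.mem_univ z)
      (by linarith : (0:ℝ) ≤ 1 - l) hl0.le (by ring)
    have hquad : ‖((1 - l) • p + l • z) - w‖ ^ 2
        = (1 - l) * ‖p - w‖ ^ 2 + l * ‖z - w‖ ^ 2 - l * (1 - l) * ‖z - p‖ ^ 2 := by
      have e1 : ((1 - l) • p + l • z) - w = (p - w) + l • ((z - w) - (p - w)) := by
        module
      have e2 : z - p = (z - w) - (p - w) := by abel
      rw [e1, e2]
      set a := p - w
      set b := z - w
      have h1 : ‖a + l • (b - a)‖ ^ 2 = ‖a‖ ^ 2 + 2 * (l * ⟪a, b - a⟫) + l ^ 2 * ‖b - a‖ ^ 2 := by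
        rw [norm_add_sq_real, real_inner_smul_right, norm_smul, Real.norm_eq_abs, mul_pow, sq_abs]
        try ring
      have h2 : ‖b - a‖ ^ 2 = ‖b‖ ^ 2 - 2 * ⟪a, b⟫ + ‖a‖ ^ 2 := by
        rw [norm_sub_sq_real, real_inner_comm]
        try ring
      have h3 : ⟪a, b - a⟫ = ⟪a, b⟫ - ‖a‖ ^ 2 := by
        rw [inner_sub_right, real_inner_self_eq_norm_sq]
      rw [h1, h3, h2]; ring
    have harith : (1 - l) * (l * K) ≤ l * D := by
      have expand : ‖((1 - l) • p + l • z) - w‖ ^ 2 / (2 * γ') + g ((1 - l) • p + l • z)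
          ≤ (1 - l) * (‖p - w‖ ^ 2 / (2 * γ') + g p) + l * (‖z - w‖ ^ 2 / (2 * γ') + g z)
            - l * (1 - l) * K := by
        rw [hquad, hK]
        simp only [smul_eq_mul] at hconv
        have hsplit : ((1 - l) * ‖p - w‖ ^ 2 + l * ‖z - w‖ ^ 2 - l * (1 - l) * ‖z - p‖ ^ 2) / (2 * γ')
            = (1 - l) * (‖p - w‖ ^ 2 / (2 * γ')) + l * (‖z - w‖ ^ 2 / (2 * γ'))
              - l * (1 - l) * (‖z - p‖ ^ 2 / (2 * γ')) := by ring
        rw [hsplit]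
        linarith [hconv]
      have := le_trans hmin expand
      rw [hD]; nlinarith [this]
    have hl0' : (0:ℝ) < l := hl0
    have h' : l * ((1 - l) * K) ≤ l * D := by nlinarith [harith]
    exact le_of_mul_le_mul_left h' hl0'
  have ht : Filter.Tendsto (fun l : ℝ => (1 - l) * K) (nhdsWithin 0 (Set.Ioi 0)) (nhds K) := by
    have hcont : Continuous fun l : ℝ => (1 - l) * K := by continuity
    have h0 := hcont.tendsto 0
    simp only [sub_zero, one_mul] at h0
    exact h0.mono_left nhdsWithin_le_nhds
  have hKD : K ≤ D := by
    refine le_of_tendsto ht ?_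
    have hmem : Set.Ioo (0:ℝ) 1 ∈ nhdsWithin 0 (Set.Ioi 0) := Ioo_mem_nhdsGT_of_mem
      (Set.mem_Ico.mpr ⟨le_refl 0, one_pos⟩)
    exact Filter.eventually_of_mem hmem key
  rw [hK, hD] at hKD; linarith

lemma pigd_coeff (Li l c b b' : ℝ) (hLi : 0 < Li) (hl : l ≤ Li) (hc0 : 0 < c) (hc1 : c < 1)
    (hb'0 : 0 ≤ b') (hb'b : b' ≤ b) (hb1 : b < 1) :
    (1 - c) * l / (2 * c) + b' / (2 * (2 * (1 - b') * c / Li)) + Li / 2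
      + b / (2 * (2 * (1 - b) * c / Li)) ≤ 1 / (2 * (1 - b) * c / Li) := by
  have h1b : 0 < 1 - b := by linarith
  have h1b' : 0 < 1 - b' := by linarith
  have hLne : Li ≠ 0 := ne_of_gt hLi
  have hcne : c ≠ 0 := ne_of_gt hc0
  have e1 : 1 / (2 * (1 - b) * c / Li) = Li / (2 * (1 - b) * c) := by
    field_simp
  have e2 : b / (2 * (2 * (1 - b) * c / Li)) = b * Li / (4 * (1 - b) * c) := by
    field_simp
    ring
  have e3 : b' / (2 * (2 * (1 - b') * c / Li)) = b' * Li / (4 * (1 - b') * c) := by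
    field_simp
    ring
  rw [e1, e2, e3]
  have step1 : (1 - c) * l / (2 * c) ≤ (1 - c) * Li / (2 * c) := by
    gcongr
  have step2 : Li / (2 * (1 - b) * c)
      - ((1 - c) * Li / (2 * c) + b' * Li / (4 * (1 - b') * c) + Li / 2
        + b * Li / (4 * (1 - b) * c))
      = Li * (b - b') / (4 * c * (1 - b) * (1 - b')) := by
    field_simp
    ring
  have step3 : 0 ≤ Li * (b - b') / (4 * c * (1 - b) * (1 - b')) := by
    apply div_nonneg
    · nlinarith
    · positivity
  linarith

set_option maxHeartbeats 2000000

/-- Lemma 7, descent inequality for cyclic coordinate PIGD. -/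
theorem pigd_stmt8
    {m : ℕ} (hm : 0 < m) (nn : Fin m → ℕ)
    (f F : PIGDSpace m nn → ℝ)
    (g : (i : Fin m) → EuclideanSpace ℝ (Fin (nn i)) → ℝ)
    (f' : PIGDSpace m nn → PIGDSpace m nn)
    (L : Fin m → ℝ) (hL : ∀ i, 0 < L i)
    (c : ℝ) (hc0 : 0 < c) (hc1 : c < 1)
    (hfconv : ConvexOn ℝ Set.univ f)
    (hgconv : ∀ i, ConvexOn ℝ Set.univ (g i))
    (hgcont : ∀ i, Continuous (g i))
    (hf' : ∀ x, HasGradientAt f (f' x) x)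
    -- blockwise Lipschitz continuity of the block gradients
    (hlip : ∀ (i : Fin m) (x : PIGDSpace m nn) (u v : EuclideanSpace ℝ (Fin (nn i))),
      ‖f' (WithLp.toLp 2 (Function.update x i u)) i - f' (WithLp.toLp 2 (Function.update x i v)) i‖ ≤ L i * ‖u - v‖)
    (hF : ∀ x, F x = f x + ∑ i, g i (x i))
    (hFbdd : BddBelow (Set.range F))
    (β γ : ℕ → Fin m → ℝ)
    (hβnonneg : ∀ k i, 0 ≤ β k i) (hβlt : ∀ k i, β k i < 1)
    (hβmono : ∀ k i, β (k + 1) i ≤ β k i)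
    (hγ : ∀ k i, γ k i = 2 * (1 - β k i) * c / L i)
    (prox : (i : Fin m) → ℝ → EuclideanSpace ℝ (Fin (nn i)) → EuclideanSpace ℝ (Fin (nn i)))
    (hprox : ∀ (i : Fin m) (γ' : ℝ) (y : EuclideanSpace ℝ (Fin (nn i))), 0 < γ' →
      IsMinOn (fun z => ‖z - y‖ ^ 2 / (2 * γ') + g i z) Set.univ (prox i γ' y))
    (x : ℤ → PIGDSpace m nn)
    -- `y k i` is the partially updated point whose blocks `j < i` are those of `x (k+1)`
    (y : ℕ → Fin m → PIGDSpace m nn)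
    (hy : ∀ (k : ℕ) (i j : Fin m), y k i j = if (j : ℕ) < (i : ℕ) then x (k + 1) j else x k j)
    -- cyclic coordinate PIGD iteration
    (hiter : ∀ (k : ℕ) (i : Fin m),
      x (k + 1) i
        = prox i (γ k i) (x k i - γ k i • f' (y k i) i + β k i • (x k i - x ((k : ℤ) - 1) i)))
    :
    ∀ k : ℕ,
      (F (x k) + ∑ i, β k i / (2 * γ k i) * ‖x k i - x ((k : ℤ) - 1) i‖ ^ 2)
        - (F (x (k + 1)) + ∑ i, β (k + 1) i / (2 * γ (k + 1) i) * ‖x (k + 1) i - x k i‖ ^ 2)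
      ≥ (1 - c) * (⨅ i, L i) / (2 * c) * ‖x (k + 1) - x k‖ ^ 2 := by
  intro k
  have γpos : ∀ (j : ℕ) (i : Fin m), 0 < γ j i := by
    intro j i
    rw [hγ]
    have h1 := hβlt j i
    have h2 := hL i
    apply div_pos (by nlinarith) h2
  set s : (i : Fin m) → EuclideanSpace ℝ (Fin (nn i)) :=
    fun i => x ((k : ℤ) + 1) i - x (k : ℤ) i with hs
  set d : (i : Fin m) → EuclideanSpace ℝ (Fin (nn i)) :=
    fun i => x (k : ℤ) i - x ((k : ℤ) - 1) i with hd
  set Z : ℕ → PIGDSpace m nn :=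
    fun j => WithLp.toLp 2 (fun l : Fin m => if (l : ℕ) < j then x ((k : ℤ) + 1) l else x (k : ℤ) l) with hZ
  have hZy : ∀ i : Fin m, Z (i : ℕ) = y k i := by
    intro i; ext l : 1; rw [hy k i l]
  have hZ0 : Z 0 = x (k : ℤ) := by
    ext l : 1; simp [hZ]
  have hZm : Z m = x ((k : ℤ) + 1) := by
    ext l : 1; simp [hZ, l.isLt]
  have hZsucc : ∀ i : Fin m, Z ((i : ℕ) + 1) = WithLp.toLp 2 (Function.update (Z (i : ℕ)) i (x ((k : ℤ) + 1) i)) := by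
    intro i; ext l : 1
    by_cases h : l = i
    · subst h; simp [hZ, Nat.lt_succ_self]
    · have hne : (l : ℕ) ≠ (i : ℕ) := fun hc => h (Fin.ext hc)
      have hiff : ((l : ℕ) < (i : ℕ) + 1) ↔ ((l : ℕ) < (i : ℕ)) := by omega
      have hiff' : l ≤ i ↔ l < i := ⟨fun h1 => lt_of_le_of_ne h1 h, le_of_lt⟩
      simp [hZ, Function.update_of_ne h, hiff, hiff']
  have hyi : ∀ i : Fin m, y k i i = x (k : ℤ) i := by
    intro i; rw [hy k i i]; simp
  -- per-block inequality
  have blockineq : ∀ i : Fin m,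
      f (Z ((i : ℕ) + 1)) + g i (x ((k : ℤ) + 1) i) - f (Z (i : ℕ)) - g i (x (k : ℤ) i)
        ≤ (L i / 2 - 1 / γ k i + β k i / (2 * γ k i)) * ‖s i‖ ^ 2
          + β k i / (2 * γ k i) * ‖d i‖ ^ 2 := by
    intro i
    set γi := γ k i with hγi
    set bi := β k i with hbi
    set gr := f' (y k i) i with hgr
    have hγipos : 0 < γi := γpos k i
    have hγine : γi ≠ 0 := ne_of_gt hγipos
    -- descent step
    have hdes : f (Z ((i : ℕ) + 1)) ≤ f (Z (i : ℕ)) + ⟪gr, s i⟫ + L i / 2 * ‖s i‖ ^ 2 := by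
      have h1 := pigd_block_descent f f' hf' i (L i) (hL i).le (hlip i) (y k i) (s i)
      have h2 : y k i i + s i = x ((k : ℤ) + 1) i := by
        rw [hyi i]; simp only [hs]; module
      rw [h2] at h1
      rw [hZsucc i, hZy i]
      exact h1
    -- prox step
    have hmin0 := hprox i γi (x (k : ℤ) i - γi • gr + bi • d i) hγipos
    have hpx : prox i γi (x (k : ℤ) i - γi • gr + bi • d i) = x ((k : ℤ) + 1) i := by
      rw [hiter k i]
    rw [hpx] at hmin0
    have hps := pigd_prox_strong (g i) (hgconv i) γi hγipos
      (x (k : ℤ) i - γi • gr + bi • d i) (x ((k : ℤ) + 1) i) hmin0 (x (k : ℤ) i)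
    set w : EuclideanSpace ℝ (Fin (nn i)) := x (k : ℤ) i - γi • gr + bi • d i with hw
    have e1 : x ((k : ℤ) + 1) i - w = s i + (γi • gr - bi • d i) := by
      simp only [hw, hs, hd]; module
    have e2 : x (k : ℤ) i - w = γi • gr - bi • d i := by
      simp only [hw, hd]; module
    have e3 : ‖x (k : ℤ) i - x ((k : ℤ) + 1) i‖ = ‖s i‖ := by
      simp only [hs]; exact norm_sub_rev _ _
    rw [e1, e2, e3] at hps
    have e4 : ‖s i + (γi • gr - bi • d i)‖ ^ 2
        = ‖s i‖ ^ 2 + 2 * (γi * ⟪s i, gr⟫ - bi * ⟪s i, d i⟫) + ‖γi • gr - bi • d i‖ ^ 2 := by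
      rw [norm_add_sq_real, inner_sub_right, real_inner_smul_right, real_inner_smul_right]
    rw [e4] at hps
    have e5 : (‖s i‖ ^ 2 + 2 * (γi * ⟪s i, gr⟫ - bi * ⟪s i, d i⟫)
          + ‖γi • gr - bi • d i‖ ^ 2) / (2 * γi)
        = ‖s i‖ ^ 2 / (2 * γi) + ⟪s i, gr⟫ - (bi / γi) * ⟪s i, d i⟫
          + ‖γi • gr - bi • d i‖ ^ 2 / (2 * γi) := by
      field_simp
      ring
    rw [e5] at hps
    -- hps : ‖s‖²/(2γ) + ⟪s,gr⟫ - (b/γ)⟪s,d⟫ + ‖a‖²/(2γ) + g(x') + ‖s‖²/(2γ) ≤ ‖a‖²/(2γ) + g(xk)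
    have hcross : ⟪s i, d i⟫ ≤ (‖s i‖ ^ 2 + ‖d i‖ ^ 2) / 2 := by
      nlinarith [real_inner_le_norm (s i) (d i), sq_nonneg (‖s i‖ - ‖d i‖)]
    have hbγ : 0 ≤ bi / γi := div_nonneg (hβnonneg k i) hγipos.le
    have hcross2 : (bi / γi) * ⟪s i, d i⟫
        ≤ bi / (2 * γi) * ‖s i‖ ^ 2 + bi / (2 * γi) * ‖d i‖ ^ 2 := by
      have h6 : (bi / γi) * ⟪s i, d i⟫ ≤ (bi / γi) * ((‖s i‖ ^ 2 + ‖d i‖ ^ 2) / 2) :=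
        mul_le_mul_of_nonneg_left hcross hbγ
      have h7 : (bi / γi) * ((‖s i‖ ^ 2 + ‖d i‖ ^ 2) / 2)
          = bi / (2 * γi) * ‖s i‖ ^ 2 + bi / (2 * γi) * ‖d i‖ ^ 2 := by
        field_simp
      linarith
    have hcomm : ⟪gr, s i⟫ = ⟪s i, gr⟫ := real_inner_comm _ _
    have hhalf : ‖s i‖ ^ 2 / (2 * γi) + ‖s i‖ ^ 2 / (2 * γi) = (1 / γi) * ‖s i‖ ^ 2 := by
      field_simp
      ring
    have hhalf2 : ‖s i‖ ^ 2 / (2 * γi) = 1 / (2 * γi) * ‖s i‖ ^ 2 := by ring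
    have hco : bi / (2 * γi) * ‖s i‖ ^ 2 - (1 / γi) * ‖s i‖ ^ 2 + ‖s i‖ ^ 2 / (2 * γi)
        = (bi / (2 * γi) - 1 / (2 * γi)) * ‖s i‖ ^ 2 := by
      field_simp; ring
    -- combine
    have hfin : g i (x ((k : ℤ) + 1) i)
        ≤ g i (x (k : ℤ) i) - (1 / γi) * ‖s i‖ ^ 2 - ⟪s i, gr⟫
          + bi / (2 * γi) * ‖s i‖ ^ 2 + bi / (2 * γi) * ‖d i‖ ^ 2 := by
      linarith [hps, hcross2, hhalf]
    have hexp : (L i / 2 - 1 / γi + bi / (2 * γi)) * ‖s i‖ ^ 2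
        = L i / 2 * ‖s i‖ ^ 2 - (1 / γi) * ‖s i‖ ^ 2 + bi / (2 * γi) * ‖s i‖ ^ 2 := by
      ring
    linarith [hdes, hfin]
  -- telescoping sum
  have htel : ∑ i : Fin m, (f (Z ((i : ℕ) + 1)) - f (Z (i : ℕ))) = f (x ((k : ℤ) + 1)) - f (x (k : ℤ)) := by
    rw [Fin.sum_univ_eq_sum_range (fun j => f (Z (j + 1)) - f (Z j)) m,
      Finset.sum_range_sub (fun j => f (Z j)) m, hZm, hZ0]
  have hsum := Finset.sum_le_sum (fun i (_ : i ∈ Finset.univ) => blockineq i)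
  rw [Finset.sum_add_distrib] at hsum
  have hsum2 : ∑ i : Fin m,
      (f (Z ((i : ℕ) + 1)) + g i (x ((k : ℤ) + 1) i) - f (Z (i : ℕ)) - g i (x (k : ℤ) i))
      = (f (x ((k : ℤ) + 1)) - f (x (k : ℤ)))
        + (∑ i, g i (x ((k : ℤ) + 1) i) - ∑ i, g i (x (k : ℤ) i)) := by
    rw [← htel]
    rw [← Finset.sum_sub_distrib]
    rw [← Finset.sum_add_distrib]
    apply Finset.sum_congr rfl
    intro i _
    ring
  rw [hsum2] at hsum
  have hFk : F (x (k : ℤ)) = f (x (k : ℤ)) + ∑ i, g i (x (k : ℤ) i) := hF _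
  have hFk1 : F (x ((k : ℤ) + 1)) = f (x ((k : ℤ) + 1)) + ∑ i, g i (x ((k : ℤ) + 1) i) := hF _
  -- key1 : F(x^{k+1}) - F(x^k) ≤ ∑ RHS
  have key1 : F (x ((k : ℤ) + 1)) - F (x (k : ℤ))
      ≤ ∑ i, ((L i / 2 - 1 / γ k i + β k i / (2 * γ k i)) * ‖s i‖ ^ 2)
        + ∑ i, (β k i / (2 * γ k i) * ‖d i‖ ^ 2) := by
    rw [hFk, hFk1]; linarith [hsum]
  -- coefficient bound
  have hbdd : BddBelow (Set.range L) := (Set.finite_range L).bddBelow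
  have coeff : ∀ i : Fin m,
      (1 - c) * (⨅ j, L j) / (2 * c) + β (k + 1) i / (2 * γ (k + 1) i) + L i / 2
        + β k i / (2 * γ k i) ≤ 1 / γ k i := by
    intro i
    rw [hγ k i, hγ (k + 1) i]
    exact pigd_coeff (L i) (⨅ j, L j) c (β k i) (β (k + 1) i) (hL i) (ciInf_le hbdd i)
      hc0 hc1 (hβnonneg (k + 1) i) (hβmono k i) (hβlt k i)
  -- per-block final inequality
  have per : ∀ i : Fin m,
      (1 - c) * (⨅ j, L j) / (2 * c) * ‖s i‖ ^ 2
        + β (k + 1) i / (2 * γ (k + 1) i) * ‖s i‖ ^ 2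
        + ((L i / 2 - 1 / γ k i + β k i / (2 * γ k i)) * ‖s i‖ ^ 2)
      ≤ 0 := by
    intro i
    have h0 : (1 - c) * (⨅ j, L j) / (2 * c) + β (k + 1) i / (2 * γ (k + 1) i)
        + (L i / 2 - 1 / γ k i + β k i / (2 * γ k i)) ≤ 0 := by
      linarith [coeff i]
    nlinarith [sq_nonneg ‖s i‖, h0]
  have sumper := Finset.sum_le_sum (fun i (_ : i ∈ Finset.univ) => per i)
  rw [Finset.sum_add_distrib, Finset.sum_add_distrib] at sumper
  simp only [Finset.sum_const_zero] at sumper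
  rw [← Finset.mul_sum] at sumper
  -- norm identity
  have hnorm : ‖x ((k : ℤ) + 1) - x (k : ℤ)‖ ^ 2 = ∑ i, ‖s i‖ ^ 2 := by
    rw [PiLp.norm_sq_eq_of_L2]
    apply Finset.sum_congr rfl
    intro i _
    rfl
  -- finish
  have hgoal : (F (x (k : ℤ)) + ∑ i, β k i / (2 * γ k i) * ‖d i‖ ^ 2)
      - (F (x ((k : ℤ) + 1)) + ∑ i, β (k + 1) i / (2 * γ (k + 1) i) * ‖s i‖ ^ 2)
      ≥ (1 - c) * (⨅ i, L i) / (2 * c) * ‖x ((k : ℤ) + 1) - x (k : ℤ)‖ ^ 2 := by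
    rw [hnorm]
    linarith [key1, sumper]
  exact hgoal
end

section
/- Under the stochastic coordinate PIGD setup, for every k ≥ 0: [E F(x^k) + (β_k/(2√m γ_k)) E‖x^k − x^{k−1}‖²] − [E F(x^{k+1}) + (β_{k+1}/(2√m γ_{k+1})) E‖x^{k+1} − x^k‖²] ≥ ((1 − β_k/√m)/γ_k − L/2)·E‖x^{k+1} − x^k‖². -/
open scoped RealInnerProductSpace

theorem pigd_descent {E : Type*} [NormedAddCommGroup E] [InnerProductSpace ℝ E]
    [CompleteSpace E] {f : E → ℝ} {f' : E → E} {L : ℝ} (hL : 0 ≤ L)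
    (hf' : ∀ x, HasGradientAt f (f' x) x)
    (hlip : ∀ x y, ‖f' x - f' y‖ ≤ L * ‖x - y‖) (x y : E) :
    f y ≤ f x + ⟪f' x, y - x⟫ + L / 2 * ‖y - x‖ ^ 2 := by
  set v := y - x with hv
  have hcomp : ∀ t : ℝ, HasDerivAt (fun s : ℝ => f (x + s • v)) ⟪f' (x + t • v), v⟫ t := by
    intro t
    have hline : HasDerivAt (fun s : ℝ => x + s • v) v t := by
      simpa using ((hasDerivAt_id t).smul_const v).const_add x
    have h1 := (hf' (x + t • v)).hasFDerivAt
    have h2 := h1.comp_hasDerivAt t hline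
    simp only [InnerProductSpace.toDual_apply_apply] at h2
    exact h2
  set φ : ℝ → ℝ := fun t => f (x + t • v) - t * ⟪f' x, v⟫ - L * t ^ 2 / 2 * ‖v‖ ^ 2 with hφ
  have hφ' : ∀ t : ℝ, HasDerivAt φ (⟪f' (x + t • v), v⟫ - ⟪f' x, v⟫ - L * t * ‖v‖ ^ 2) t := by
    intro t
    have h1 : HasDerivAt (fun t : ℝ => t * ⟪f' x, v⟫) ⟪f' x, v⟫ t := by
      simpa using (hasDerivAt_id t).mul_const ⟪f' x, v⟫
    have h2 : HasDerivAt (fun t : ℝ => L * t ^ 2 / 2 * ‖v‖ ^ 2) (L * t * ‖v‖ ^ 2) t := by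
      have := (((hasDerivAt_pow 2 t).const_mul L).div_const 2).mul_const (‖v‖ ^ 2)
      refine this.congr_deriv ?_
      simp only [Nat.cast_ofNat, Nat.add_one_sub_one, pow_one]
      ring
    exact ((hcomp t).sub h1).sub h2
  have hdiff : Differentiable ℝ φ := fun t => (hφ' t).differentiableAt
  have hanti : AntitoneOn φ (Set.Icc 0 1) := by
    apply antitoneOn_of_deriv_nonpos (convex_Icc 0 1) hdiff.continuous.continuousOn
      hdiff.differentiableOn
    intro t ht
    rw [interior_Icc] at ht
    rw [(hφ' t).deriv]
    have h3 : ⟪f' (x + t • v), v⟫ - ⟪f' x, v⟫ ≤ L * t * ‖v‖ ^ 2 := by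
      calc ⟪f' (x + t • v), v⟫ - ⟪f' x, v⟫ = ⟪f' (x + t • v) - f' x, v⟫ := by
            rw [inner_sub_left]
        _ ≤ ‖f' (x + t • v) - f' x‖ * ‖v‖ := real_inner_le_norm _ _
        _ ≤ (L * ‖x + t • v - x‖) * ‖v‖ :=
            mul_le_mul_of_nonneg_right (hlip _ _) (norm_nonneg _)
        _ = L * t * ‖v‖ ^ 2 := by
            rw [add_sub_cancel_left, norm_smul, Real.norm_eq_abs, abs_of_pos ht.1]
            ring
    linarith
  have h01 := hanti (Set.mem_Icc.mpr ⟨le_refl 0, zero_le_one⟩)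
    (Set.mem_Icc.mpr ⟨zero_le_one, le_refl 1⟩) zero_le_one
  have h0 : φ 0 = f x := by simp [hφ]
  have hxy : x + (1:ℝ) • v = y := by rw [one_smul, hv]; abel
  have h1 : φ 1 = f y - ⟪f' x, v⟫ - L / 2 * ‖v‖ ^ 2 := by
    simp only [hφ, hxy, one_pow, mul_one, one_mul]
    try ring
  rw [h0, h1] at h01
  linarith

theorem pigd_prox_ineq {E : Type*} [NormedAddCommGroup E] [InnerProductSpace ℝ E]
    {g : E → ℝ} (hg : ConvexOn ℝ Set.univ g) {γ : ℝ} (hγ : 0 < γ) {y p : E}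
    (hp : IsMinOn (fun z => ‖z - y‖ ^ 2 / (2 * γ) + g z) Set.univ p) (z : E) :
    ‖p - y‖ ^ 2 / (2 * γ) + g p + ‖z - p‖ ^ 2 / (2 * γ) ≤ ‖z - y‖ ^ 2 / (2 * γ) + g z := by
  have hid : ∀ t : ℝ, ‖(1 - t) • p + t • z - y‖ ^ 2
      = (1 - t) * ‖p - y‖ ^ 2 + t * ‖z - y‖ ^ 2 - t * (1 - t) * ‖z - p‖ ^ 2 := by
    intro t
    have h1 : (1 - t) • p + t • z - y = (p - y) + t • (z - p) := by module
    have h2 : ‖z - y‖ ^ 2 = ‖p - y‖ ^ 2 + 2 * ⟪p - y, z - p⟫ + ‖z - p‖ ^ 2 := by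
      rw [show z - y = (p - y) + (z - p) by abel, norm_add_sq_real]
    rw [h1, norm_add_sq_real, real_inner_smul_right, norm_smul, Real.norm_eq_abs, mul_pow,
      sq_abs]
    linear_combination (-t) * h2
  have hmin := isMinOn_iff.mp hp
  have key : ∀ t ∈ Set.Ioc (0:ℝ) 1,
      ‖p - y‖ ^ 2 / (2 * γ) + g p
        ≤ ‖z - y‖ ^ 2 / (2 * γ) + g z - (1 - t) * (‖z - p‖ ^ 2 / (2 * γ)) := by
    intro t ht
    have hw := hmin ((1 - t) • p + t • z) (Set.mem_univ _)
    rw [hid t] at hw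
    have hgw := hg.2 (Set.mem_univ p) (Set.mem_univ z)
      (by linarith [ht.2] : (0:ℝ) ≤ 1 - t) ht.1.le (by ring)
    have hdiv : ((1 - t) * ‖p - y‖ ^ 2 + t * ‖z - y‖ ^ 2 - t * (1 - t) * ‖z - p‖ ^ 2) / (2 * γ)
        = (1 - t) * (‖p - y‖ ^ 2 / (2 * γ)) + t * (‖z - y‖ ^ 2 / (2 * γ))
          - t * (1 - t) * (‖z - p‖ ^ 2 / (2 * γ)) := by ring
    rw [hdiv] at hw
    simp only [smul_eq_mul] at hgw
    have hc : t * (‖p - y‖ ^ 2 / (2 * γ) + g p)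
        ≤ t * (‖z - y‖ ^ 2 / (2 * γ) + g z - (1 - t) * (‖z - p‖ ^ 2 / (2 * γ)))  := by
      nlinarith [hw, hgw]
    exact le_of_mul_le_mul_left (by linarith [hc]) ht.1
  have hlim : Filter.Tendsto
      (fun t : ℝ => ‖z - y‖ ^ 2 / (2 * γ) + g z - (1 - t) * (‖z - p‖ ^ 2 / (2 * γ)))
      (nhdsWithin 0 (Set.Ioi 0))
      (nhds (‖z - y‖ ^ 2 / (2 * γ) + g z - ‖z - p‖ ^ 2 / (2 * γ))) := by
    have hcont : Continuous
        (fun t : ℝ => ‖z - y‖ ^ 2 / (2 * γ) + g z - (1 - t) * (‖z - p‖ ^ 2 / (2 * γ)))  := by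
      continuity
    have h0 := hcont.tendsto 0
    simp only [sub_zero, one_mul] at h0
    exact h0.mono_left nhdsWithin_le_nhds
  have hev : ∀ᶠ t in nhdsWithin 0 (Set.Ioi 0),
      ‖p - y‖ ^ 2 / (2 * γ) + g p
        ≤ ‖z - y‖ ^ 2 / (2 * γ) + g z - (1 - t) * (‖z - p‖ ^ 2 / (2 * γ)) := by
    filter_upwards [Ioc_mem_nhdsGT_of_mem (Set.mem_Ico.mpr ⟨le_refl 0, one_pos⟩)] with t ht
    exact key t ht
  have := ge_of_tendsto hlim hev
  linarith

theorem pigd_key_step {m : ℕ} {nn : Fin m → ℕ}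
    {f F : PIGDSpace m nn → ℝ}
    {g : (i : Fin m) → EuclideanSpace ℝ (Fin (nn i)) → ℝ}
    {f' : PIGDSpace m nn → PIGDSpace m nn} {L : ℝ} (hL : 0 < L)
    (hgconv : ∀ i, ConvexOn ℝ Set.univ (g i))
    (hf' : ∀ x, HasGradientAt f (f' x) x)
    (hlip : ∀ x y, ‖f' x - f' y‖ ≤ L * ‖x - y‖)
    (hF : ∀ x, F x = f x + ∑ i, g i (x i))
    {prox : (i : Fin m) → ℝ → EuclideanSpace ℝ (Fin (nn i)) → EuclideanSpace ℝ (Fin (nn i))}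
    (hprox : ∀ (i : Fin m) (γ' : ℝ) (y : EuclideanSpace ℝ (Fin (nn i))), 0 < γ' →
      IsMinOn (fun z => ‖z - y‖ ^ 2 / (2 * γ') + g i z) Set.univ (prox i γ' y))
    {s γk βk : ℝ} (hs : 1 ≤ s) (hγk : 0 < γk) (hβk : 0 ≤ βk)
    (xk xp xn : PIGDSpace m nn) (i : Fin m)
    (hoff : ∀ j, j ≠ i → xn j = xk j)
    (hit : xn i = prox i γk (xk i - γk • f' xk i + βk • (xk i - xp i))) :
    F xn ≤ F xk + (L / 2 - 1 / γk + βk / (2 * s * γk)) * ‖xn - xk‖ ^ 2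
      + (βk * s / (2 * γk)) * ‖(xk - xp) i‖ ^ 2 := by
  have hs0 : (0:ℝ) < s := lt_of_lt_of_le one_pos hs
  have hγne : γk ≠ 0 := ne_of_gt hγk
  have hsne : s ≠ 0 := ne_of_gt hs0
  have hdesc := pigd_descent hL.le hf' hlip xk xn
  have hoff0 : ∀ j, j ≠ i → (xn - xk) j = 0 := fun j hj => by
    rw [PiLp.sub_apply, hoff j hj, sub_self]
  have hinner : ⟪f' xk, xn - xk⟫ = ⟪f' xk i, xn i - xk i⟫ := by
    rw [PiLp.inner_apply, Finset.sum_eq_single i]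
    · rw [PiLp.sub_apply]
    · exact fun j _ hj => by rw [hoff0 j hj, inner_zero_right]
    · exact fun h => absurd (Finset.mem_univ i) h
  have hnorm : ‖xn - xk‖ ^ 2 = ‖xn i - xk i‖ ^ 2 := by
    rw [PiLp.norm_sq_eq_of_L2, Finset.sum_eq_single i]
    · rw [PiLp.sub_apply]
    · exact fun j _ hj => by rw [hoff0 j hj, norm_zero]; exact zero_pow two_ne_zero
    · exact fun h => absurd (Finset.mem_univ i) h
  have hEi : (xk - xp) i = xk i - xp i := rfl
  have hpx := pigd_prox_ineq (hgconv i) hγk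
    (hprox i γk (xk i - γk • f' xk i + βk • (xk i - xp i)) hγk) (xk i)
  rw [← hit] at hpx
  have e1 : xk i - (xk i - γk • f' xk i + βk • (xk i - xp i))
      = γk • f' xk i - βk • (xk i - xp i) := by module
  have e2 : xn i - (xk i - γk • f' xk i + βk • (xk i - xp i))
      = (xn i - xk i) + (γk • f' xk i - βk • (xk i - xp i)) := by module
  rw [e1, e2, norm_add_sq_real, inner_sub_right, real_inner_smul_right, real_inner_smul_right,
    norm_sub_rev (xk i) (xn i)] at hpx
  have hg2 : g i (xn i) ≤ g i (xk i) - ‖xn i - xk i‖ ^ 2 / γk - ⟪xn i - xk i, f' xk i⟫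
      + (βk / γk) * ⟪xn i - xk i, xk i - xp i⟫ := by
    have hexp : (‖xn i - xk i‖ ^ 2
          + 2 * (γk * ⟪xn i - xk i, f' xk i⟫ - βk * ⟪xn i - xk i, xk i - xp i⟫)
          + ‖γk • f' xk i - βk • (xk i - xp i)‖ ^ 2) / (2 * γk)
          + ‖xn i - xk i‖ ^ 2 / (2 * γk)
        = ‖xn i - xk i‖ ^ 2 / γk + ⟪xn i - xk i, f' xk i⟫
          - (βk / γk) * ⟪xn i - xk i, xk i - xp i⟫
          + ‖γk • f' xk i - βk • (xk i - xp i)‖ ^ 2 / (2 * γk) := by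
      field_simp
      ring
    linarith [hpx, hexp]
  have hgsum : (∑ j, g j (xn j)) - (∑ j, g j (xk j)) = g i (xn i) - g i (xk i) := by
    rw [← Finset.sum_sub_distrib, Finset.sum_eq_single i]
    · exact fun j _ hj => by rw [hoff j hj, sub_self]
    · exact fun h => absurd (Finset.mem_univ i) h
  have hyoung : ⟪xn i - xk i, xk i - xp i⟫
      ≤ ‖xn i - xk i‖ ^ 2 / (2 * s) + s * ‖xk i - xp i‖ ^ 2 / 2 := by
    have h1 := real_inner_le_norm (xn i - xk i) (xk i - xp i)
    have h3 : ‖xn i - xk i‖ ^ 2 / (2 * s) + s * ‖xk i - xp i‖ ^ 2 / 2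
          - ‖xn i - xk i‖ * ‖xk i - xp i‖
        = (‖xn i - xk i‖ - s * ‖xk i - xp i‖) ^ 2 / (2 * s) := by
      field_simp
      ring
    have h4 : (0:ℝ) ≤ (‖xn i - xk i‖ - s * ‖xk i - xp i‖) ^ 2 / (2 * s) := by positivity
    linarith
  have hbg : (βk / γk) * ⟪xn i - xk i, xk i - xp i⟫
      ≤ βk / (2 * s * γk) * ‖xn i - xk i‖ ^ 2 + (βk * s / (2 * γk)) * ‖xk i - xp i‖ ^ 2 := by
    have h5 : (βk / γk) * ⟪xn i - xk i, xk i - xp i⟫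
        ≤ (βk / γk) * (‖xn i - xk i‖ ^ 2 / (2 * s) + s * ‖xk i - xp i‖ ^ 2 / 2) :=
      mul_le_mul_of_nonneg_left hyoung (by positivity)
    have h6 : (βk / γk) * (‖xn i - xk i‖ ^ 2 / (2 * s) + s * ‖xk i - xp i‖ ^ 2 / 2)
        = βk / (2 * s * γk) * ‖xn i - xk i‖ ^ 2 + (βk * s / (2 * γk)) * ‖xk i - xp i‖ ^ 2 := by
      field_simp
    linarith
  have hcm : ⟪f' xk i, xn i - xk i⟫ = ⟪xn i - xk i, f' xk i⟫ := real_inner_comm _ _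
  rw [hF xn, hF xk, hEi, hnorm]
  have hexpand : (L / 2 - 1 / γk + βk / (2 * s * γk)) * ‖xn i - xk i‖ ^ 2
      = L / 2 * ‖xn i - xk i‖ ^ 2 - ‖xn i - xk i‖ ^ 2 / γk
        + βk / (2 * s * γk) * ‖xn i - xk i‖ ^ 2 := by ring
  rw [hexpand]
  rw [hinner, hnorm] at hdesc
  linarith [hdesc, hg2, hgsum, hbg, hcm]


theorem pigd_arith1 {s γ L b : ℝ} (hs : s ≠ 0) (hγ : γ ≠ 0) :
    (1 - b / s) / γ - L / 2
      = -(L / 2 - 1 / γ + b / (2 * s * γ)) - b / (2 * s * γ) := by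
  field_simp
  ring

theorem pigd_arith2 {s γ b M A : ℝ} (hs : s ≠ 0) (hγ : γ ≠ 0) (hM : s * s = M) :
    b * s / (2 * γ) * (M⁻¹ * A) = b / (2 * s * γ) * A := by
  subst hM
  field_simp

set_option maxHeartbeats 1000000 in
/-- Lemma 9, expected descent inequality for stochastic coordinate
PIGD. -/
theorem pigd_stmt12
    {m : ℕ} (hm : 0 < m) (nn : Fin m → ℕ)
    (f F : PIGDSpace m nn → ℝ)
    (g : (i : Fin m) → EuclideanSpace ℝ (Fin (nn i)) → ℝ)
    (f' : PIGDSpace m nn → PIGDSpace m nn)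
    (L c : ℝ) (hL : 0 < L) (hc0 : 0 < c) (hc1 : c < 1)
    (hfconv : ConvexOn ℝ Set.univ f)
    (hgconv : ∀ i, ConvexOn ℝ Set.univ (g i))
    (hgcont : ∀ i, Continuous (g i))
    (hf' : ∀ x, HasGradientAt f (f' x) x)
    (hlip : ∀ x y, ‖f' x - f' y‖ ≤ L * ‖x - y‖)
    (hF : ∀ x, F x = f x + ∑ i, g i (x i))
    (hFbdd : BddBelow (Set.range F))
    (prox : (i : Fin m) → ℝ → EuclideanSpace ℝ (Fin (nn i)) → EuclideanSpace ℝ (Fin (nn i)))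
    (hprox : ∀ (i : Fin m) (γ' : ℝ) (y : EuclideanSpace ℝ (Fin (nn i))), 0 < γ' →
      IsMinOn (fun z => ‖z - y‖ ^ 2 / (2 * γ') + g i z) Set.univ (prox i γ' y))
    -- probability space and i.i.d. uniform random indices
    {Ω : Type} [MeasurableSpace Ω] (μ : MeasureTheory.Measure Ω)
    [MeasureTheory.IsProbabilityMeasure μ]
    (idx : ℕ → Ω → Fin m)
    (hidx_meas : ∀ k, Measurable (idx k))
    (hidx_indep : ProbabilityTheory.iIndepFun idx μ)
    (hidx_unif : ∀ (k : ℕ) (j : Fin m), μ {ω | idx k ω = j} = (m : ENNReal)⁻¹)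
    -- the random iterates, with deterministic initial points
    (X : ℤ → Ω → PIGDSpace m nn)
    (xm1 x0 : PIGDSpace m nn)
    (hXm1 : ∀ ω, X (-1) ω = xm1) (hX0 : ∀ ω, X 0 ω = x0)
    (β γ : ℕ → ℝ)
    (hβnonneg : ∀ k, 0 ≤ β k) (hβlt : ∀ k, β k < 1)
    (hβmono : ∀ k, β (k + 1) ≤ β k)
    (hγ : ∀ k, γ k = 2 * (1 - β k / Real.sqrt m) * c / L)
    -- stochastic coordinate PIGD iteration
    (hiter_off : ∀ (k : ℕ) (ω : Ω) (j : Fin m), j ≠ idx k ω → X (k + 1) ω j = X k ω j)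
    (hiter : ∀ (k : ℕ) (ω : Ω),
      X (k + 1) ω (idx k ω)
        = prox (idx k ω) (γ k)
            (X k ω (idx k ω) - γ k • f' (X k ω) (idx k ω)
              + β k • (X k ω (idx k ω) - X ((k : ℤ) - 1) ω (idx k ω))))
    -- all expectations appearing are finite
    (hintF : ∀ k : ℕ, MeasureTheory.Integrable (fun ω => F (X k ω)) μ)
    (hintD : ∀ k : ℕ,
      MeasureTheory.Integrable (fun ω => ‖X k ω - X ((k : ℤ) - 1) ω‖ ^ 2) μ) :
    ∀ k : ℕ,
      ((∫ ω, F (X k ω) ∂μ)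
          + β k / (2 * Real.sqrt m * γ k) * ∫ ω, ‖X k ω - X ((k : ℤ) - 1) ω‖ ^ 2 ∂μ)
        - ((∫ ω, F (X (k + 1) ω) ∂μ)
          + β (k + 1) / (2 * Real.sqrt m * γ (k + 1)) * ∫ ω, ‖X (k + 1) ω - X k ω‖ ^ 2 ∂μ)
      ≥ ((1 - β k / Real.sqrt m) / γ k - L / 2) * ∫ ω, ‖X (k + 1) ω - X k ω‖ ^ 2 ∂μ := by
  intro k
  have hm1 : (1:ℝ) ≤ (m:ℝ) := by exact_mod_cast hm
  have hs1 : 1 ≤ Real.sqrt (m:ℝ) := Real.one_le_sqrt.mpr hm1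
  have hs0 : (0:ℝ) < Real.sqrt (m:ℝ) := lt_of_lt_of_le one_pos hs1
  have hsne : Real.sqrt (m:ℝ) ≠ 0 := ne_of_gt hs0
  have hss : Real.sqrt (m:ℝ) * Real.sqrt (m:ℝ) = (m:ℝ) := Real.mul_self_sqrt (by positivity)
  have hβs : ∀ k' : ℕ, β k' / Real.sqrt (m:ℝ) < 1 := fun k' =>
    lt_of_le_of_lt (div_le_self (hβnonneg k') hs1) (hβlt k')
  have hγpos : ∀ k' : ℕ, 0 < γ k' := by
    intro k'
    rw [hγ k']
    exact div_pos (by nlinarith [hβs k', hc0]) hL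
  have hγne : ∀ k' : ℕ, γ k' ≠ 0 := fun k' => ne_of_gt (hγpos k')
  -- representation of the iterates as functions of the indices
  have hrep : ∀ n : ℕ, ∃ φ ψ : (Fin n → Fin m) → PIGDSpace m nn,
      (∀ ω, X (n : ℤ) ω = φ (fun i => idx i ω)) ∧
      (∀ ω, X ((n : ℤ) - 1) ω = ψ (fun i => idx i ω)) := by
    intro n
    induction n with
    | zero =>
        refine ⟨fun _ => x0, fun _ => xm1, fun ω => by simpa using hX0 ω, fun ω => ?_⟩
        have h : ((0:ℕ) : ℤ) - 1 = -1 := by norm_num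
        rw [h]
        exact hXm1 ω
    | succ n ih =>
        obtain ⟨φ, ψ, hφ, hψ⟩ := ih
        refine ⟨fun v =>
            (WithLp.toLp 2 (Function.update
              (φ (fun i => v i.castSucc) : ∀ j, EuclideanSpace ℝ (Fin (nn j)))
              (v (Fin.last n))
              (prox (v (Fin.last n)) (γ n)
                (φ (fun i => v i.castSucc) (v (Fin.last n))
                  - γ n • f' (φ (fun i => v i.castSucc)) (v (Fin.last n))
                  + β n • (φ (fun i => v i.castSucc) (v (Fin.last n))
                      - ψ (fun i => v i.castSucc) (v (Fin.last n)))))) : PIGDSpace m nn),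
          fun v => φ (fun i => v i.castSucc), fun ω => ?_, fun ω => ?_⟩
        · have hc : ((n + 1 : ℕ) : ℤ) = (n : ℤ) + 1 := by push_cast; ring
          rw [hc]
          simp only [Fin.coe_castSucc, Fin.val_last]
          rw [← hφ ω, ← hψ ω]
          refine PiLp.ext fun j => ?_
          by_cases hj : j = idx n ω
          · subst hj
            exact (hiter n ω).trans (Function.update_self (idx n ω) _ (WithLp.ofLp (X (n:ℤ) ω))).symm
          · exact (hiter_off n ω j hj).trans (Function.update_of_ne hj _ _).symm
        · have hc2 : ((n + 1 : ℕ) : ℤ) - 1 = (n : ℤ) := by push_cast; ring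
          rw [hc2]
          simp only [Fin.coe_castSucc]
          exact hφ ω
  obtain ⟨φk, ψk, hφk, hψk⟩ := hrep k
  -- measurability and integrability of the blockwise squared norms
  have hmeasH : ∀ j : Fin m,
      Measurable (fun ω => ‖(X (k:ℤ) ω - X ((k:ℤ) - 1) ω) j‖ ^ 2) := by
    intro j
    have heq : (fun ω => ‖(X (k:ℤ) ω - X ((k:ℤ) - 1) ω) j‖ ^ 2)
        = (fun v : Fin k → Fin m => ‖(φk v - ψk v) j‖ ^ 2)
            ∘ (fun ω => fun i : Fin k => idx i ω) := by
      funext ω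
      simp only [Function.comp_apply]
      rw [hφk ω, hψk ω]
    rw [heq]
    exact (measurable_of_countable _).comp (measurable_pi_lambda _ fun i => hidx_meas i)
  have hintH : ∀ j : Fin m,
      MeasureTheory.Integrable (fun ω => ‖(X (k:ℤ) ω - X ((k:ℤ) - 1) ω) j‖ ^ 2) μ := by
    intro j
    refine (hintD k).mono' (hmeasH j).aestronglyMeasurable
      (Filter.Eventually.of_forall fun ω => ?_)
    rw [Real.norm_of_nonneg (by positivity)]
    refine le_trans (Finset.single_le_sum
      (f := fun j => ‖(X (k:ℤ) ω - X ((k:ℤ) - 1) ω) j‖ ^ 2)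
      (fun i _ => by positivity) (Finset.mem_univ j)) ?_
    exact le_of_eq (PiLp.norm_sq_eq_of_L2 _ _).symm
  have hmeasI : ∀ j : Fin m, Measurable (fun ω => if idx k ω = j then (1:ℝ) else 0) := by
    intro j
    exact Measurable.ite (hidx_meas k (measurableSet_singleton j))
      measurable_const measurable_const
  have hintI : ∀ j : Fin m,
      MeasureTheory.Integrable (fun ω => if idx k ω = j then (1:ℝ) else 0) μ := by
    intro j
    refine (MeasureTheory.integrable_const (1:ℝ)).mono' (hmeasI j).aestronglyMeasurable
      (Filter.Eventually.of_forall fun ω => ?_)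
    by_cases h : idx k ω = j <;> simp [h]
  have hintIH : ∀ j : Fin m,
      MeasureTheory.Integrable
        (fun ω => (if idx k ω = j then (1:ℝ) else 0)
          * ‖(X (k:ℤ) ω - X ((k:ℤ) - 1) ω) j‖ ^ 2) μ := by
    intro j
    refine (hintH j).mono' ((hmeasI j).mul (hmeasH j)).aestronglyMeasurable
      (Filter.Eventually.of_forall fun ω => ?_)
    by_cases h : idx k ω = j
    · simp only [h, if_true, one_mul]
      rw [Real.norm_of_nonneg (by positivity)]
    · simp only [h, if_false, zero_mul, norm_zero]
      positivity
  -- independence of the indicator and the past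
  have hindep : ∀ j : Fin m,
      ProbabilityTheory.IndepFun (fun ω => if idx k ω = j then (1:ℝ) else 0)
        (fun ω => ‖(X (k:ℤ) ω - X ((k:ℤ) - 1) ω) j‖ ^ 2) μ := by
    intro j
    have base := hidx_indep.indepFun_finset {k} (Finset.range k)
      (Finset.disjoint_singleton_left.mpr (by simp)) hidx_meas
    have hcomp := base.comp
      (measurable_of_countable (fun v : ((({k} : Finset ℕ) : Type) → Fin m) =>
        if v ⟨k, Finset.mem_singleton_self k⟩ = j then (1:ℝ) else 0))
      (measurable_of_countable (fun v : (((Finset.range k : Finset ℕ) : Type) → Fin m) =>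
        ‖(φk (fun i => v ⟨(i:ℕ), Finset.mem_range.mpr i.isLt⟩)
          - ψk (fun i => v ⟨(i:ℕ), Finset.mem_range.mpr i.isLt⟩)) j‖ ^ 2))
    have h2eq : ((fun v : (((Finset.range k : Finset ℕ) : Type) → Fin m) =>
        ‖(φk (fun i => v ⟨(i:ℕ), Finset.mem_range.mpr i.isLt⟩)
          - ψk (fun i => v ⟨(i:ℕ), Finset.mem_range.mpr i.isLt⟩)) j‖ ^ 2)
          ∘ (fun a (i : ((Finset.range k : Finset ℕ) : Type)) => idx i a))
        = (fun ω => ‖(X (k:ℤ) ω - X ((k:ℤ) - 1) ω) j‖ ^ 2) := by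
      funext ω
      simp only [Function.comp_apply]
      rw [hφk ω, hψk ω]
    rw [h2eq] at hcomp
    exact hcomp
  -- expectation of the indicator
  have hIint : ∀ j : Fin m,
      ∫ ω, (if idx k ω = j then (1:ℝ) else 0) ∂μ = (m:ℝ)⁻¹ := by
    intro j
    have hset : MeasurableSet {ω | idx k ω = j} := hidx_meas k (measurableSet_singleton j)
    have heq : (fun ω => if idx k ω = j then (1:ℝ) else 0)
        = Set.indicator {ω | idx k ω = j} (fun _ => (1:ℝ)) := by
      funext ω
      by_cases h : idx k ω = j <;> simp [Set.indicator_apply, h]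
    rw [heq, MeasureTheory.integral_indicator_const (1:ℝ) hset, MeasureTheory.measureReal_def, hidx_unif k j]
    simp [ENNReal.toReal_inv]
  have hprodint : ∀ j : Fin m,
      ∫ ω, (if idx k ω = j then (1:ℝ) else 0) * ‖(X (k:ℤ) ω - X ((k:ℤ) - 1) ω) j‖ ^ 2 ∂μ
        = (m:ℝ)⁻¹ * ∫ ω, ‖(X (k:ℤ) ω - X ((k:ℤ) - 1) ω) j‖ ^ 2 ∂μ := by
    intro j
    have h := (hindep j).integral_fun_mul_eq_mul_integral (hintI j).aestronglyMeasurable (hintH j).aestronglyMeasurable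
    rw [← hIint j]
    exact h
  have hsum_pt : ∀ ω, (∑ j : Fin m,
      (if idx k ω = j then (1:ℝ) else 0) * ‖(X (k:ℤ) ω - X ((k:ℤ) - 1) ω) j‖ ^ 2)
        = ‖(X (k:ℤ) ω - X ((k:ℤ) - 1) ω) (idx k ω)‖ ^ 2 := by
    intro ω
    simp [ite_mul]
  have hintG : MeasureTheory.Integrable
      (fun ω => ‖(X (k:ℤ) ω - X ((k:ℤ) - 1) ω) (idx k ω)‖ ^ 2) μ := by
    have heq : (fun ω => ‖(X (k:ℤ) ω - X ((k:ℤ) - 1) ω) (idx k ω)‖ ^ 2)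
        = fun ω => ∑ j : Fin m,
            (if idx k ω = j then (1:ℝ) else 0) * ‖(X (k:ℤ) ω - X ((k:ℤ) - 1) ω) j‖ ^ 2 := by
      funext ω
      rw [hsum_pt ω]
    rw [heq]
    exact MeasureTheory.integrable_finset_sum _ (fun j _ => hintIH j)
  have hG_eq : ∫ ω, ‖(X (k:ℤ) ω - X ((k:ℤ) - 1) ω) (idx k ω)‖ ^ 2 ∂μ
      = (m:ℝ)⁻¹ * ∫ ω, ‖X (k:ℤ) ω - X ((k:ℤ) - 1) ω‖ ^ 2 ∂μ := by
    have h1 : ∫ ω, ‖(X (k:ℤ) ω - X ((k:ℤ) - 1) ω) (idx k ω)‖ ^ 2 ∂μ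
        = ∑ j : Fin m, ∫ ω,
            (if idx k ω = j then (1:ℝ) else 0) * ‖(X (k:ℤ) ω - X ((k:ℤ) - 1) ω) j‖ ^ 2 ∂μ := by
      rw [← MeasureTheory.integral_finset_sum _ (fun j _ => hintIH j)]
      congr 1
      funext ω
      exact (hsum_pt ω).symm
    rw [h1]
    simp only [hprodint]
    rw [← Finset.mul_sum]
    congr 1
    rw [← MeasureTheory.integral_finset_sum _ (fun j _ => hintH j)]
    congr 1
    funext ω
    exact (PiLp.norm_sq_eq_of_L2 _ _).symm
  -- integrability of the squared step
  have hintd : MeasureTheory.Integrable (fun ω => ‖X ((k:ℤ) + 1) ω - X (k:ℤ) ω‖ ^ 2) μ := by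
    have h := hintD (k + 1)
    push_cast at h
    simpa using h
  have hintF1 : MeasureTheory.Integrable (fun ω => F (X ((k:ℤ) + 1) ω)) μ := by
    have h := hintF (k + 1)
    push_cast at h
    exact h
  -- pointwise key inequality
  have key : ∀ ω, F (X ((k:ℤ) + 1) ω) ≤ F (X (k:ℤ) ω)
      + (L / 2 - 1 / γ k + β k / (2 * Real.sqrt (m:ℝ) * γ k))
        * ‖X ((k:ℤ) + 1) ω - X (k:ℤ) ω‖ ^ 2
      + (β k * Real.sqrt (m:ℝ) / (2 * γ k))
        * ‖(X (k:ℤ) ω - X ((k:ℤ) - 1) ω) (idx k ω)‖ ^ 2 := by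
    intro ω
    exact pigd_key_step hL hgconv hf' hlip hF hprox hs1 (hγpos k) (hβnonneg k)
      (X (k:ℤ) ω) (X ((k:ℤ) - 1) ω) (X ((k:ℤ) + 1) ω) (idx k ω)
      (fun j hj => hiter_off k ω j hj) (hiter k ω)
  have hmono : ∫ ω, F (X ((k:ℤ) + 1) ω) ∂μ
      ≤ ∫ ω, (F (X (k:ℤ) ω)
          + (L / 2 - 1 / γ k + β k / (2 * Real.sqrt (m:ℝ) * γ k))
            * ‖X ((k:ℤ) + 1) ω - X (k:ℤ) ω‖ ^ 2
          + (β k * Real.sqrt (m:ℝ) / (2 * γ k))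
            * ‖(X (k:ℤ) ω - X ((k:ℤ) - 1) ω) (idx k ω)‖ ^ 2) ∂μ := by
    refine MeasureTheory.integral_mono hintF1 ?_ key
    exact ((hintF k).add (hintd.const_mul _)).add (hintG.const_mul _)
  have hint1 : MeasureTheory.Integrable (fun ω => F (X (k:ℤ) ω)
      + (L / 2 - 1 / γ k + β k / (2 * Real.sqrt (m:ℝ) * γ k))
        * ‖X ((k:ℤ) + 1) ω - X (k:ℤ) ω‖ ^ 2) μ :=
    (hintF k).add (hintd.const_mul _)
  rw [MeasureTheory.integral_add hint1 (hintG.const_mul _),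
    MeasureTheory.integral_add (hintF k) (hintd.const_mul _),
    MeasureTheory.integral_const_mul, MeasureTheory.integral_const_mul, hG_eq] at hmono
  have hA : 0 ≤ ∫ ω, ‖X ((k:ℤ) + 1) ω - X (k:ℤ) ω‖ ^ 2 ∂μ :=
    MeasureTheory.integral_nonneg fun ω => by positivity
  have hγle : γ k ≤ γ (k + 1) := by
    rw [hγ k, hγ (k + 1)]
    have h7 : β (k + 1) / Real.sqrt (m:ℝ) ≤ β k / Real.sqrt (m:ℝ) :=
      (div_le_div_iff_of_pos_right hs0).mpr (hβmono k)
    have h8 : 2 * (1 - β k / Real.sqrt (m:ℝ)) * c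
        ≤ 2 * (1 - β (k + 1) / Real.sqrt (m:ℝ)) * c := by nlinarith [hc0]
    exact (div_le_div_iff_of_pos_right hL).mpr h8
  have hfrac : β (k + 1) / (2 * Real.sqrt (m:ℝ) * γ (k + 1))
      ≤ β k / (2 * Real.sqrt (m:ℝ) * γ k) := by
    apply div_le_div₀ (hβnonneg k) (hβmono k)
      (by nlinarith [mul_pos hs0 (hγpos k)])
    nlinarith [mul_le_mul_of_nonneg_left hγle hs0.le]
  have hc2' : β k * Real.sqrt (m:ℝ) / (2 * γ k)
        * ((m:ℝ)⁻¹ * ∫ ω, ‖X (k:ℤ) ω - X ((k:ℤ) - 1) ω‖ ^ 2 ∂μ)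
      = β k / (2 * Real.sqrt (m:ℝ) * γ k) * ∫ ω, ‖X (k:ℤ) ω - X ((k:ℤ) - 1) ω‖ ^ 2 ∂μ :=
    pigd_arith2 hsne (hγne k) hss
  rw [hc2'] at hmono
  have hfA : β (k + 1) / (2 * Real.sqrt (m:ℝ) * γ (k + 1))
        * ∫ ω, ‖X ((k:ℤ) + 1) ω - X (k:ℤ) ω‖ ^ 2 ∂μ
      ≤ β k / (2 * Real.sqrt (m:ℝ) * γ k)
        * ∫ ω, ‖X ((k:ℤ) + 1) ω - X (k:ℤ) ω‖ ^ 2 ∂μ :=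
    mul_le_mul_of_nonneg_right hfrac hA
  have hT : ((1 - β k / Real.sqrt (m:ℝ)) / γ k - L / 2)
        * ∫ ω, ‖X ((k:ℤ) + 1) ω - X (k:ℤ) ω‖ ^ 2 ∂μ
      = -((L / 2 - 1 / γ k + β k / (2 * Real.sqrt (m:ℝ) * γ k))
          * ∫ ω, ‖X ((k:ℤ) + 1) ω - X (k:ℤ) ω‖ ^ 2 ∂μ)
        - β k / (2 * Real.sqrt (m:ℝ) * γ k)
          * ∫ ω, ‖X ((k:ℤ) + 1) ω - X (k:ℤ) ω‖ ^ 2 ∂μ := by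
    rw [pigd_arith1 hsne (hγne k)]
    ring
  linarith [hmono, hfA, hT]
end

section
/- Modified heavy-ball dynamical system: let f : ℝ^n → ℝ be convex, coercive, and continuously differentiable, with argmin f nonempty. Let α > θ > 0 and let x : [0,∞) → ℝ^n be twice continuously differentiable and satisfy, for all t ≥ 0, the ODE ẍ(t) + α ẋ(t) + ∇f(x(t)) = 0 together with the constraint ‖ẍ(t)‖ ≤ θ‖ẋ(t)‖. Then f(x(t)) − min f = O(1/t): there exists C > 0 such that f(x(t)) − min f ≤ C/t for all t ≥ 1. Moreover, the energy ξ_f(t) := f(x(t)) + ‖ẋ(t)‖²/2 − min f is non-increasing in t. -/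
open scoped RealInnerProductSpace

lemma pigd17_grad_ineq {n : ℕ} {f : EuclideanSpace ℝ (Fin n) → ℝ}
    (hconv : ConvexOn ℝ Set.univ f) {p g : EuclideanSpace ℝ (Fin n)}
    (hg : HasGradientAt f g p) (y : EuclideanSpace ℝ (Fin n)) :
    f p + ⟪g, y - p⟫ ≤ f y := by
  set φ : ℝ → ℝ := fun s => f (p + s • (y - p)) with hφdef
  have hline : HasDerivAt (fun s : ℝ => p + s • (y - p)) (y - p) 0 := by
    simpa using ((hasDerivAt_id (0:ℝ)).smul_const (y - p)).const_add p
  have hφ : HasDerivAt φ ⟪g, y - p⟫ 0 := by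
    have h0 : HasFDerivAt f (InnerProductSpace.toDual ℝ _ g) ((fun s : ℝ => p + s • (y - p)) 0) := by
      simpa using hg.hasFDerivAt
    have h := h0.comp_hasDerivAt 0 hline
    simp at h
    exact h
  have hslope : ∀ s ∈ Set.Ioc (0:ℝ) 1, slope φ 0 s ≤ f y - f p := by
    intro s hs
    have hval : φ s ≤ (1 - s) * f p + s * f y := by
      have hc := hconv.2 (Set.mem_univ p) (Set.mem_univ y)
        (by linarith [hs.2] : (0:ℝ) ≤ 1 - s) (le_of_lt hs.1) (by ring)
      have : p + s • (y - p) = (1 - s) • p + s • y := by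
        rw [smul_sub, sub_smul, one_smul]; abel
      simpa [hφdef, this, smul_eq_mul] using hc
    rw [slope_def_field, sub_zero, div_le_iff₀ hs.1]
    have hφ0 : φ 0 = f p := by simp [hφdef]
    nlinarith [hs.1]
  have htend : Filter.Tendsto (slope φ 0) (nhdsWithin 0 (Set.Ioi 0)) (nhds ⟪g, y - p⟫) :=
    (hasDerivAt_iff_tendsto_slope.mp hφ).mono_left
      (nhdsWithin_mono 0 (fun s hs => ne_of_gt hs))
  have hle : ⟪g, y - p⟫ ≤ f y - f p := by
    refine le_of_tendsto htend ?_
    filter_upwards [Ioc_mem_nhdsGT_of_mem (Set.mem_Ico.mpr ⟨le_refl (0:ℝ), zero_lt_one⟩)] with s hs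
    exact hslope s hs
  linarith

set_option maxHeartbeats 1000000 in
/-- modified heavy-ball dynamical system. Let `f : ℝⁿ → ℝ` be convex,
coercive, continuously differentiable, with `argmin f` nonempty. Let `α > θ > 0` and let
`x : [0,∞) → ℝⁿ` be twice continuously differentiable satisfying
`ẍ(t) + α ẋ(t) + ∇f(x(t)) = 0` and `‖ẍ(t)‖ ≤ θ‖ẋ(t)‖` for all `t ≥ 0`. Then
`f(x(t)) − min f ≤ C/t` for all `t ≥ 1`, and the energy
`ξ_f(t) = f(x(t)) + ‖ẋ(t)‖²/2 − min f` is non-increasing on `[0,∞)`. -/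
theorem pigd_stmt17
    {n : ℕ} (f : EuclideanSpace ℝ (Fin n) → ℝ)
    (f' : EuclideanSpace ℝ (Fin n) → EuclideanSpace ℝ (Fin n))
    (hfconv : ConvexOn ℝ Set.univ f)
    (hf' : ∀ p, HasGradientAt f (f' p) p)
    (hf'cont : Continuous f')
    -- `f` is coercive
    (hcoer : Filter.Tendsto f (Filter.comap norm Filter.atTop) Filter.atTop)
    -- `argmin f` is nonempty and `f xstar = min f`
    (xstar : EuclideanSpace ℝ (Fin n)) (hxstar : ∀ y, f xstar ≤ f y)
    (α θ : ℝ) (hθ : 0 < θ) (hαθ : θ < α)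
    -- `x` is twice continuously differentiable, with derivatives `x'` and `x''`
    (x x' x'' : ℝ → EuclideanSpace ℝ (Fin n))
    (hx' : ∀ t, HasDerivAt x (x' t) t)
    (hx'' : ∀ t, HasDerivAt x' (x'' t) t)
    (hx''cont : Continuous x'')
    -- the ODE and the extra constraint, for all `t ≥ 0`
    (hode : ∀ t, 0 ≤ t → x'' t + α • x' t + f' (x t) = 0)
    (hcons : ∀ t, 0 ≤ t → ‖x'' t‖ ≤ θ * ‖x' t‖) :
    (∃ C : ℝ, 0 < C ∧ ∀ t : ℝ, 1 ≤ t → f (x t) - f xstar ≤ C / t) ∧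
      AntitoneOn (fun t => f (x t) + ‖x' t‖ ^ 2 / 2 - f xstar) (Set.Ici (0 : ℝ)) := by
  have hα : 0 < α := hθ.trans hαθ
  set F := f xstar with hFdef
  -- continuity of x and x'
  have hxc : Continuous x := continuous_iff_continuousAt.mpr fun t => (hx' t).continuousAt
  have hx'c : Continuous x' := continuous_iff_continuousAt.mpr fun t => (hx'' t).continuousAt
  -- solving the ODE for the gradient
  have hgrad : ∀ t, 0 ≤ t → f' (x t) = -(x'' t + α • x' t) := by
    intro t ht
    have h := hode t ht
    have h2 : (x'' t + α • x' t) + f' (x t) = 0 := h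
    linear_combination (norm := module) h2
  -- derivative of f ∘ x
  have hfd : ∀ t, HasDerivAt (fun t => f (x t)) ⟪f' (x t), x' t⟫ t := by
    intro t
    have h := (hf' (x t)).hasFDerivAt.comp_hasDerivAt t (hx' t)
    simp at h
    exact h
  -- derivative of ‖x'‖²
  have hnd : ∀ t, HasDerivAt (fun t => ‖x' t‖ ^ 2) (2 * ⟪x'' t, x' t⟫) t := by
    intro t
    have h := (hx'' t).inner ℝ (hx'' t)
    have he : (fun t => ⟪x' t, x' t⟫) = fun t => ‖x' t‖ ^ 2 :=
      funext fun t => real_inner_self_eq_norm_sq _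
    rw [he] at h
    have h2 : HasDerivAt (fun t => ‖x' t‖ ^ 2) (⟪x' t, x'' t⟫ + ⟪x'' t, x' t⟫) t := h
    convert h2 using 1
    rw [real_inner_comm]; ring
  -- the energy function
  set ξ : ℝ → ℝ := fun t => f (x t) + ‖x' t‖ ^ 2 / 2 - F with hξdef
  have hξd : ∀ t, HasDerivAt ξ (⟪f' (x t), x' t⟫ + ⟪x'' t, x' t⟫) t := by
    intro t
    have h : HasDerivAt (fun t => f (x t) + ‖x' t‖ ^ 2 / 2 - F)
        (⟪f' (x t), x' t⟫ + 2 * ⟪x'' t, x' t⟫ / 2) t :=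
      ((hfd t).add ((hnd t).div_const 2)).sub_const F
    convert h using 1
    ring
  have hξd' : ∀ t, 0 ≤ t → HasDerivAt ξ (-(α * ‖x' t‖ ^ 2)) t := by
    intro t ht
    convert hξd t using 1
    rw [hgrad t ht]
    simp only [inner_neg_left, inner_add_left, real_inner_smul_left, real_inner_self_eq_norm_sq]
    ring
  have hξcont : Continuous ξ := continuous_iff_continuousAt.mpr fun t => (hξd t).continuousAt
  -- the energy is non-increasing
  have hant : AntitoneOn ξ (Set.Ici (0:ℝ)) := by
    apply antitoneOn_of_deriv_nonpos (convex_Ici 0) hξcont.continuousOn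
    · intro t _
      exact (hξd t).differentiableAt.differentiableWithinAt
    · intro t ht
      rw [interior_Ici] at ht
      rw [(hξd' t ht.le).deriv]
      have : (0:ℝ) ≤ α * ‖x' t‖ ^ 2 := by positivity
      linarith
  refine ⟨?_, hant⟩
  -- basic bounds on ξ
  have hξnonneg : ∀ t, 0 ≤ ξ t := by
    intro t
    have h1 := hxstar (x t)
    have h2 : (0:ℝ) ≤ ‖x' t‖ ^ 2 / 2 := by positivity
    simp only [hξdef]
    linarith
  have hξle : ∀ t, 0 ≤ t → ξ t ≤ ξ 0 := fun t ht =>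
    hant (Set.self_mem_Ici) ht ht
  have hξ0nonneg : 0 ≤ ξ 0 := hξnonneg 0
  have hfle : ∀ t, 0 ≤ t → f (x t) - F ≤ ξ 0 := by
    intro t ht
    have h2 : (0:ℝ) ≤ ‖x' t‖ ^ 2 / 2 := by positivity
    have := hξle t ht
    simp only [hξdef] at this ⊢
    linarith
  have hvle : ∀ t, 0 ≤ t → ‖x' t‖ ^ 2 ≤ 2 * ξ 0 := by
    intro t ht
    have h1 := hxstar (x t)
    have := hξle t ht
    simp only [hξdef] at this ⊢
    linarith
  -- boundedness of the trajectory via coercivity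
  obtain ⟨B, hB0, hB⟩ : ∃ B : ℝ, 0 ≤ B ∧ ∀ t, 0 ≤ t → ‖x t - xstar‖ ≤ B := by
    have hev : ∀ᶠ y in Filter.comap norm Filter.atTop, ξ 0 + F + 1 ≤ f y :=
      hcoer.eventually (Filter.eventually_ge_atTop _)
    obtain ⟨s, hs, hsub⟩ := Filter.mem_comap.mp hev
    obtain ⟨R, hR⟩ := Filter.mem_atTop_sets.mp hs
    refine ⟨max (R + ‖xstar‖) 0, le_max_right _ _, ?_⟩
    intro t ht
    have hxR : ‖x t‖ ≤ R := by
      by_contra hc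
      push_neg at hc
      have h1 : ξ 0 + F + 1 ≤ f (x t) := hsub (hR ‖x t‖ hc.le)
      have h2 := hfle t ht
      linarith
    calc ‖x t - xstar‖ ≤ ‖x t‖ + ‖xstar‖ := norm_sub_le _ _
      _ ≤ R + ‖xstar‖ := by linarith
      _ ≤ max (R + ‖xstar‖) 0 := le_max_left _ _
  -- auxiliary functions p = ⟪x', x - x*⟫ and V = ‖x - x*‖²/2
  set p : ℝ → ℝ := fun t => ⟪x' t, x t - xstar⟫ with hpdef
  set V : ℝ → ℝ := fun t => ⟪x t - xstar, x t - xstar⟫ / 2 with hVdef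
  have hxs : ∀ t, HasDerivAt (fun t => x t - xstar) (x' t) t := fun t => (hx' t).sub_const xstar
  have hpd : ∀ t, HasDerivAt p (⟪x' t, x' t⟫ + ⟪x'' t, x t - xstar⟫) t := by
    intro t
    exact (hx'' t).inner ℝ (hxs t)
  have hVd : ∀ t, HasDerivAt V (p t) t := by
    intro t
    have h : HasDerivAt (fun t => ⟪x t - xstar, x t - xstar⟫ / 2)
        ((⟪x t - xstar, x' t⟫ + ⟪x' t, x t - xstar⟫) / 2) t :=
      ((hxs t).inner ℝ (hxs t)).div_const 2
    convert h using 1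
    simp only [hpdef]
    rw [real_inner_comm (x t - xstar) (x' t)]
    ring
  have hVnonneg : ∀ t, 0 ≤ V t := by
    intro t
    have := real_inner_self_nonneg (x := x t - xstar)
    simp only [hVdef]
    linarith
  have hpc : Continuous p := continuous_iff_continuousAt.mpr fun t => (hpd t).continuousAt
  clear_value ξ p V F
  -- the key pointwise inequality
  have hkey : ∀ s, 0 ≤ s →
      f (x s) - F ≤ ‖x' s‖ ^ 2 - (⟪x' s, x' s⟫ + ⟪x'' s, x s - xstar⟫) - α * p s := by
    intro s hs
    have h1 : f (x s) + ⟪f' (x s), xstar - x s⟫ ≤ F := hFdef ▸ pigd17_grad_ineq hfconv (hf' (x s)) xstar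
    have h2 : ⟪f' (x s), xstar - x s⟫ = ⟪x'' s, x s - xstar⟫ + α * p s := by
      rw [hgrad s hs]
      simp only [inner_neg_left, inner_add_left, real_inner_smul_left, hpdef]
      rw [show xstar - x s = -(x s - xstar) by abel, inner_neg_right, inner_neg_right]
      ring
    have h3 : ⟪x' s, x' s⟫ = ‖x' s‖ ^ 2 := real_inner_self_eq_norm_sq _
    rw [h2] at h1
    linarith
  -- continuity of the integrands
  have hfc : Continuous f := by
    apply continuous_iff_continuousAt.mpr
    intro y
    exact (hf' y).hasFDerivAt.continuousAt
  have hcont1 : Continuous fun s => f (x s) - F := (hfc.comp hxc).sub continuous_const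
  have hcont2 : Continuous fun s => ‖x' s‖ ^ 2 := hx'c.norm.pow 2
  have hcont3 : Continuous fun s => ⟪x' s, x' s⟫ + ⟪x'' s, x s - xstar⟫ :=
    ((hx'c.inner hx'c)).add (hx''cont.inner (hxc.sub continuous_const))
  -- the main estimate for t ≥ 1
  refine ⟨ξ 0 / α + |p 0| + ξ 0 + (max 0 B) ^ 2 / 2 + α * V 0 + ξ 0 / (2 * α) + 1, ?_, ?_⟩
  · have h1 : 0 ≤ ξ 0 / α := by positivity
    have h2 : 0 ≤ |p 0| := abs_nonneg _
    have h3 : 0 ≤ (max 0 B) ^ 2 / 2 := by positivity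
    have h4 : 0 ≤ α * V 0 := mul_nonneg hα.le (hVnonneg 0)
    have h5 : 0 ≤ ξ 0 / (2 * α) := by positivity
    linarith
  intro t ht
  have ht0 : (0:ℝ) < t := lt_of_lt_of_le zero_lt_one ht
  have huIcc : Set.uIcc (0:ℝ) t = Set.Icc 0 t := Set.uIcc_of_le ht0.le
  -- FTC computations on [0, t]
  have hFTC1 : (∫ s in (0:ℝ)..t, α * ‖x' s‖ ^ 2) = ξ 0 - ξ t := by
    have hderiv : ∀ s ∈ Set.uIcc (0:ℝ) t, HasDerivAt (fun u => -ξ u) (α * ‖x' s‖ ^ 2) s := by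
      intro s hs
      rw [huIcc] at hs
      have h := (hξd' s hs.1).neg
      rw [neg_neg] at h
      exact h
    have hint : IntervalIntegrable (fun s => α * ‖x' s‖ ^ 2) MeasureTheory.volume 0 t :=
      (continuous_const.mul hcont2).intervalIntegrable 0 t
    have := intervalIntegral.integral_eq_sub_of_hasDerivAt hderiv hint
    rw [this]; ring
  have hFTC2 : (∫ s in (0:ℝ)..t, (⟪x' s, x' s⟫ + ⟪x'' s, x s - xstar⟫)) = p t - p 0 := by
    exact intervalIntegral.integral_eq_sub_of_hasDerivAt (fun s _ => hpd s)
      (hcont3.intervalIntegrable 0 t)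
  have hFTC3 : (∫ s in (0:ℝ)..t, p s) = V t - V 0 := by
    exact intervalIntegral.integral_eq_sub_of_hasDerivAt (fun s _ => hVd s)
      (hpc.intervalIntegrable 0 t)
  have hint2 : (∫ s in (0:ℝ)..t, ‖x' s‖ ^ 2) = (ξ 0 - ξ t) / α := by
    rw [← hFTC1, intervalIntegral.integral_const_mul]
    field_simp
  -- integral of f(x s) - F
  have hI1 : (∫ s in (0:ℝ)..t, (f (x s) - F)) ≤
      (∫ s in (0:ℝ)..t, (‖x' s‖ ^ 2 - (⟪x' s, x' s⟫ + ⟪x'' s, x s - xstar⟫) - α * p s)) := by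
    apply intervalIntegral.integral_mono_on ht0.le
      (hcont1.intervalIntegrable 0 t)
      (((hcont2.sub hcont3).sub (continuous_const.mul hpc)).intervalIntegrable 0 t)
    intro s hs
    exact hkey s hs.1
  have hI2 : (∫ s in (0:ℝ)..t, (‖x' s‖ ^ 2 - (⟪x' s, x' s⟫ + ⟪x'' s, x s - xstar⟫) - α * p s))
      = (ξ 0 - ξ t) / α - (p t - p 0) - α * (V t - V 0) := by
    rw [intervalIntegral.integral_sub
          (f := fun s => ‖x' s‖ ^ 2 - (⟪x' s, x' s⟫ + ⟪x'' s, x s - xstar⟫)) (g := fun s => α * p s)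
          ((hcont2.sub hcont3).intervalIntegrable 0 t)
        ((continuous_const.mul hpc).intervalIntegrable 0 t),
      intervalIntegral.integral_sub (hcont2.intervalIntegrable 0 t)
        (hcont3.intervalIntegrable 0 t),
      hint2, hFTC2, intervalIntegral.integral_const_mul, hFTC3]
  -- bounds on the boundary terms
  have hpt : -p t ≤ ξ 0 + (max 0 B) ^ 2 / 2 := by
    have hcs : |⟪x' t, x t - xstar⟫| ≤ ‖x' t‖ * ‖x t - xstar‖ := abs_real_inner_le_norm _ _
    have hb : ‖x t - xstar‖ ≤ max 0 B := le_trans (hB t ht0.le) (le_max_right _ _)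
    have hv : ‖x' t‖ ^ 2 ≤ 2 * ξ 0 := hvle t ht0.le
    have h1 : -p t ≤ ‖x' t‖ * ‖x t - xstar‖ := by
      simp only [hpdef]
      have := neg_abs_le (⟪x' t, x t - xstar⟫)
      linarith
    have h2 : ‖x' t‖ * ‖x t - xstar‖ ≤ ‖x' t‖ * max 0 B :=
      mul_le_mul_of_nonneg_left hb (norm_nonneg _)
    have h3 : ‖x' t‖ * max 0 B ≤ (‖x' t‖ ^ 2 + (max 0 B) ^ 2) / 2 := by
      nlinarith [sq_nonneg (‖x' t‖ - max 0 B)]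
    linarith
  have hξtnonneg : 0 ≤ ξ t := hξnonneg t
  have hI3 : (∫ s in (0:ℝ)..t, (f (x s) - F)) ≤
      ξ 0 / α + |p 0| + ξ 0 + (max 0 B) ^ 2 / 2 + α * V 0 := by
    have h1 : (ξ 0 - ξ t) / α ≤ ξ 0 / α :=
      (div_le_div_iff_of_pos_right hα).mpr (by linarith [hξnonneg t])
    have h2 : p 0 ≤ |p 0| := le_abs_self _
    have h3 : 0 ≤ α * V t := mul_nonneg hα.le (hVnonneg t)
    rw [hI2] at hI1
    nlinarith
  -- average of ξ bounds ξ t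
  have havg : t * ξ t ≤ (∫ s in (0:ℝ)..t, ξ s) := by
    have hconst : (∫ s in (0:ℝ)..t, ξ t) = t * ξ t := by
      rw [intervalIntegral.integral_const]; simp [smul_eq_mul]
    rw [← hconst]
    apply intervalIntegral.integral_mono_on ht0.le
      (intervalIntegrable_const) (hξcont.intervalIntegrable 0 t)
    intro s hs
    exact hant hs.1 ht0.le hs.2
  have hsplit : (∫ s in (0:ℝ)..t, ξ s)
      = (∫ s in (0:ℝ)..t, (f (x s) - F)) + (∫ s in (0:ℝ)..t, ‖x' s‖ ^ 2) / 2 := by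
    rw [← intervalIntegral.integral_div,
      ← intervalIntegral.integral_add (hcont1.intervalIntegrable 0 t)
        ((hcont2.div_const 2).intervalIntegrable 0 t)]
    apply intervalIntegral.integral_congr
    intro s _
    simp only [hξdef]
    ring
  have hhalf : (∫ s in (0:ℝ)..t, ‖x' s‖ ^ 2) / 2 ≤ ξ 0 / (2 * α) := by
    rw [hint2]
    have h1 : (ξ 0 - ξ t) / α ≤ ξ 0 / α :=
      (div_le_div_iff_of_pos_right hα).mpr (by linarith [hξnonneg t])
    have h2 : ξ 0 / (2 * α) = (ξ 0 / α) / 2 := by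
      rw [div_div, mul_comm]
    linarith
  have hfinal : t * ξ t ≤
      ξ 0 / α + |p 0| + ξ 0 + (max 0 B) ^ 2 / 2 + α * V 0 + ξ 0 / (2 * α) + 1 := by
    rw [hsplit] at havg
    linarith
  have hξCt : ξ t ≤ (ξ 0 / α + |p 0| + ξ 0 + (max 0 B) ^ 2 / 2 + α * V 0 + ξ 0 / (2 * α) + 1) / t := by
    rw [le_div_iff₀ ht0]
    linarith [hfinal]
  have : f (x t) - F ≤ ξ t := by
    have h2 : (0:ℝ) ≤ ‖x' t‖ ^ 2 / 2 := by positivity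
    simp only [hξdef]
    linarith
  linarith
end
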